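/- arXiv:2112.14586 — 4 statements merged into one kernel-verified Lean document; each statement's English description precedes it below -/
import Mathlib

section
/- Let q > 0, a_1, …, a_T ≥ 0, Δ_0 = 0, and define Δ_t recursively by δ_t = a_t q / Δ_t, Δ_t = Δ_{t-1} + δ_t (so Δ_t is the positive root of Δ_t² = Δ_{t-1}Δ_t + a_t q). Then Δ_T ≤ sqrt(2 q Σ_{t=1}^T a_t). -/
/-- Refined isotuning bound: `Δ_T ≤ sqrt(2 q Σ a_t)`. -/
theorem isotuning_refined_bound
    (T : ℕ) (q : ℝ) (hq : 0 < q)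
    (a : ℕ → ℝ) (ha : ∀ t ∈ Finset.Icc 1 T, 0 ≤ a t)
    (Δ : ℕ → ℝ) (hΔ0 : Δ 0 = 0)
    (hΔ : ∀ t ∈ Finset.Icc 1 T,
      Δ t = (Δ (t-1) + Real.sqrt ((Δ (t-1))^2 + 4 * (a t * q))) / 2) :
    Δ T ≤ Real.sqrt (2 * q * ∑ t ∈ Finset.Icc 1 T, a t) := by
  have key : ∀ n ≤ T, 0 ≤ Δ n ∧ (Δ n)^2 ≤ 2*q*∑ t ∈ Finset.Icc 1 n, a t := by
    intro n hn
    induction n with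
    | zero => simp [hΔ0]
    | succ m ih =>
      obtain ⟨hd0, hd2⟩ := ih (le_of_lt (Nat.lt_of_succ_le hn))
      have hmem : m + 1 ∈ Finset.Icc 1 T := by
        simp [Nat.succ_le_iff]; omega
      have hrec := hΔ _ hmem
      simp only [Nat.add_sub_cancel] at hrec
      set c : ℝ := a (m+1) * q with hc
      have hc0 : 0 ≤ c := mul_nonneg (ha _ hmem) hq.le
      set d := Δ m with hd
      set s := Real.sqrt (d^2 + 4*c) with hs
      have hs2 : s^2 = d^2 + 4*c := Real.sq_sqrt (by nlinarith)
      have hsd : d ≤ s := by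
        have := Real.sqrt_le_sqrt (show d^2 ≤ d^2 + 4*c by linarith)
        rwa [Real.sqrt_sq hd0] at this
      have hΔn : Δ (m+1) = (d + s)/2 := hrec
      have hpos : 0 ≤ Δ (m+1) := by
        rw [hΔn]; positivity
      refine ⟨hpos, ?_⟩
      have hsum : ∑ t ∈ Finset.Icc 1 (m+1), a t
          = (∑ t ∈ Finset.Icc 1 m, a t) + a (m+1) := by
        rw [Finset.sum_Icc_succ_top (by omega)]
      rw [hsum, hΔn]
      nlinarith [sq_nonneg (s - d)]
  obtain ⟨h0, h2⟩ := key T le_rfl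
  have := Real.sqrt_le_sqrt h2
  rwa [Real.sqrt_sq h0] at this
end

section
/- For all x ∈ ℝ, (e^x − x − 1)(1 − x/3) ≤ x²/2. -/
open Real

private noncomputable def gF (x : ℝ) : ℝ := (Real.exp x - x - 1) * (1 - x / 3) - x ^ 2 / 2
private noncomputable def g1 (x : ℝ) : ℝ :=
  (Real.exp x - 1) * (1 - x / 3) - (Real.exp x - x - 1) / 3 - x
private noncomputable def g2 (x : ℝ) : ℝ := (Real.exp x * (1 - x) - 1) / 3

private lemma hasDerivAt_gF (x : ℝ) : HasDerivAt gF (g1 x) x := by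
  have h1 : HasDerivAt (fun x : ℝ => Real.exp x - x - 1) (Real.exp x - 1) x := by
    simpa using ((Real.hasDerivAt_exp x).sub (hasDerivAt_id x)).sub_const 1
  have h2 : HasDerivAt (fun x : ℝ => 1 - x / 3) (0 - 1 / 3) x :=
    (hasDerivAt_const x 1).sub ((hasDerivAt_id x).div_const 3)
  have h3 : HasDerivAt (fun x : ℝ => x ^ 2 / 2) ((2 : ℕ) * x ^ 1 / 2) x :=
    (hasDerivAt_pow 2 x).div_const 2
  have := (h1.mul h2).sub h3
  convert this using 1
  · rfl
  · rfl
  · rfl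
  unfold g1; push_cast; ring

private lemma hasDerivAt_g1 (x : ℝ) : HasDerivAt g1 (g2 x) x := by
  have h1 : HasDerivAt (fun x : ℝ => Real.exp x - 1) (Real.exp x - 0) x :=
    (Real.hasDerivAt_exp x).sub (hasDerivAt_const x 1)
  have h2 : HasDerivAt (fun x : ℝ => 1 - x / 3) (0 - 1 / 3) x :=
    (hasDerivAt_const x 1).sub ((hasDerivAt_id x).div_const 3)
  have h3 : HasDerivAt (fun x : ℝ => (Real.exp x - x - 1) / 3) ((Real.exp x - 1) / 3) x := by
    have : HasDerivAt (fun x : ℝ => Real.exp x - x - 1) (Real.exp x - 1) x := by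
      simpa using ((Real.hasDerivAt_exp x).sub (hasDerivAt_id x)).sub_const 1
    exact this.div_const 3
  have := ((h1.mul h2).sub h3).sub (hasDerivAt_id x)
  convert this using 1
  · rfl
  · rfl
  · rfl
  unfold g2; ring

private lemma g2_nonpos (x : ℝ) : g2 x ≤ 0 := by
  have h := Real.add_one_le_exp (-x)
  have hx := Real.exp_pos x
  have hmul : Real.exp x * (1 - x) ≤ Real.exp x * Real.exp (-x) := by
    apply mul_le_mul_of_nonneg_left _ (le_of_lt hx)
    linarith
  rw [← Real.exp_add] at hmul
  simp at hmul
  unfold g2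
  linarith

private lemma g1_antitone : Antitone g1 := by
  apply antitone_of_deriv_nonpos
  · exact fun x => (hasDerivAt_g1 x).differentiableAt
  · intro x
    rw [(hasDerivAt_g1 x).deriv]
    exact g2_nonpos x

private lemma g1_zero : g1 0 = 0 := by unfold g1; simp

private lemma gF_nonpos (x : ℝ) : gF x ≤ 0 := by
  have hg0 : gF 0 = 0 := by unfold gF; simp
  have hdiff : Differentiable ℝ gF := fun x => (hasDerivAt_gF x).differentiableAt
  rcases le_total x 0 with hx | hx
  · have hmono : MonotoneOn gF (Set.Iic 0) := by
      apply monotoneOn_of_deriv_nonneg (convex_Iic 0) hdiff.continuous.continuousOn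
        (hdiff.differentiableOn)
      intro y hy
      rw [(hasDerivAt_gF y).deriv]
      have : g1 y ≥ g1 0 := g1_antitone (le_of_lt (by simpa using hy))
      rw [g1_zero] at this; linarith
    calc gF x ≤ gF 0 := hmono (by simpa using hx) (by simp) hx
    _ = 0 := hg0
  · have hanti : AntitoneOn gF (Set.Ici 0) := by
      apply antitoneOn_of_deriv_nonpos (convex_Ici 0) hdiff.continuous.continuousOn
        (hdiff.differentiableOn)
      intro y hy
      rw [(hasDerivAt_gF y).deriv]
      have : g1 y ≤ g1 0 := g1_antitone (le_of_lt (by simpa using hy))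
      rw [g1_zero] at this; linarith
    calc gF x ≤ gF 0 := hanti (by simp) (by simpa using hx) hx
    _ = 0 := hg0

/-- Sharp quadratic bound on the exponential. -/
theorem exp_quadratic_bound (x : ℝ) :
    (Real.exp x - x - 1) * (1 - x / 3) ≤ x ^ 2 / 2 := by
  have := gF_nonpos x
  unfold gF at this
  linarith
end

section
/- Consider online gradient descent on a closed bounded convex set X ⊆ ℝ^N with update x_{t+1} = Π_X(x_t − η_t ∇_t), where ∇_t = ∇ℓ_t(x_t), each ℓ_t is α_t-strongly convex (α_t ≥ 0), the learning rates satisfy η_t > 0 and 1/η_t − α_t − 1/η_{t-1} ≥ 0 for all t (with 1/η_0 = 0 allowed formally). Then for any x* ∈ X, 2 Σ_{t=1}^T (ℓ_t(x_t) − ℓ_t(x*)) ≤ (max_{t∈[T]} ‖x_t − x*‖₂²)(1/η_T − Σ_{t=1}^T α_t − 1/η_0) + Σ_{t=1}^T η_t ‖∇_t‖₂² + (1/η_0)‖x_1 − x*‖₂². -/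
open scoped RealInnerProductSpace

lemma aogd_sum_shift (a b : ℕ → ℝ) :
    ∀ T : ℕ, 1 ≤ T →
      ∑ t ∈ Finset.Icc 1 T, a (t + 1) * b t =
        ∑ t ∈ Finset.Icc 1 T, a t * b (t - 1) - a 1 * b 0 + a (T + 1) * b T := by
  intro T hT
  induction T, hT using Nat.le_induction with
  | base => simp
  | succ n hn ih =>
    rw [Finset.sum_Icc_succ_top (by omega), Finset.sum_Icc_succ_top (by omega), ih]
    simp only [Nat.add_sub_cancel]
    ring

lemma aogd_sum_tele (f : ℕ → ℝ) :
    ∀ T : ℕ, 1 ≤ T →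
      ∑ t ∈ Finset.Icc 1 T, (f t - f (t - 1)) = f T - f 0 := by
  intro T hT
  induction T, hT using Nat.le_induction with
  | base => simp
  | succ n hn ih =>
    rw [Finset.sum_Icc_succ_top (by omega), ih]
    simp only [Nat.add_sub_cancel]
    ring

lemma aogd_proj_sq {E : Type*} [NormedAddCommGroup E] [InnerProductSpace ℝ E]
    {X : Set E} (hXc : Convex ℝ X) {p z w : E} (hp : p ∈ X) (hw : w ∈ X)
    (hmin : ∀ y ∈ X, ‖p - z‖ ≤ ‖y - z‖) : ‖p - w‖ ^ 2 ≤ ‖z - w‖ ^ 2 := by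
  have hvar : ⟪z - p, w - p⟫ ≤ 0 := by
    have hs : ∀ s : ℝ, 0 < s → s ≤ 1 → 2 * ⟪z - p, w - p⟫ ≤ s * ‖w - p‖ ^ 2 := by
      intro s hs0 hs1
      have hy : p + s • (w - p) ∈ X := by
        have h := hXc hp hw (by linarith : (0:ℝ) ≤ 1 - s) hs0.le (by ring)
        convert h using 1
        rw [smul_sub]
        module
      have h1 := hmin _ hy
      have h2 : ‖p - z‖ ^ 2 ≤ ‖p + s • (w - p) - z‖ ^ 2 :=
        pow_le_pow_left₀ (norm_nonneg _) h1 2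
      have hexp : p + s • (w - p) - z = (p - z) + s • (w - p) := by abel
      rw [hexp, norm_add_sq_real, real_inner_smul_right, norm_smul] at h2
      have habs : |s| = s := abs_of_pos hs0
      rw [Real.norm_eq_abs, habs] at h2
      have hneg : ⟪p - z, w - p⟫ = -⟪z - p, w - p⟫ := by
        rw [← inner_neg_left]; congr 1; abel
      nlinarith [sq_nonneg (‖w - p‖)]
    by_contra hc
    push_neg at hc
    set c := ⟪z - p, w - p⟫ with hcdef
    set K := ‖w - p‖ ^ 2 with hK
    have hK0 : (0:ℝ) ≤ K := by positivity
    have hspos : 0 < min 1 (c / (K + 1)) :=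
      lt_min one_pos (div_pos hc (by linarith))
    have h2 := hs _ hspos (min_le_left _ _)
    have h3 : min 1 (c / (K + 1)) * K ≤ c / (K + 1) * K :=
      mul_le_mul_of_nonneg_right (min_le_right _ _) hK0
    have h4 : c / (K + 1) * (K + 1) = c := div_mul_cancel₀ c (by linarith)
    nlinarith
  have hexp : z - w = (z - p) + (p - w) := by abel
  have hn := norm_add_sq_real (z - p) (p - w)
  have hip : ⟪z - p, p - w⟫ = -⟪z - p, w - p⟫ := by
    rw [← inner_neg_right]; congr 1; abel
  rw [hexp, hn, hip]
  nlinarith [sq_nonneg ‖z - p‖]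

/-- AOGD regret lemma for online gradient descent with strongly convex losses.
Here `1/η 0` may formally be `0` (Lean's convention `1/0 = 0`). -/
theorem aogd_regret
    (N T : ℕ) (hT : 1 ≤ T)
    (X : Set (EuclideanSpace ℝ (Fin N)))
    (hXc : Convex ℝ X) (hXcl : IsClosed X) (hXb : Bornology.IsBounded X)
    (ℓ : ℕ → EuclideanSpace ℝ (Fin N) → ℝ)
    (α : ℕ → ℝ) (hα : ∀ t ∈ Finset.Icc 1 T, 0 ≤ α t)
    (x : ℕ → EuclideanSpace ℝ (Fin N)) (hx1 : x 1 ∈ X)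
    (G : ℕ → EuclideanSpace ℝ (Fin N))
    (hsc : ∀ t ∈ Finset.Icc 1 T, ∀ y ∈ X,
      ℓ t (x t) + ⟪y - x t, G t⟫ + α t / 2 * ‖y - x t‖ ^ 2 ≤ ℓ t y)
    (η : ℕ → ℝ) (hη0 : 0 ≤ η 0)
    (hη : ∀ t ∈ Finset.Icc 1 T, 0 < η t ∧ 0 ≤ 1 / η t - α t - 1 / η (t - 1))
    (hproj : ∀ t ∈ Finset.Icc 1 T, x (t + 1) ∈ X ∧
      ∀ y ∈ X, ‖x (t + 1) - (x t - η t • G t)‖ ≤ ‖y - (x t - η t • G t)‖)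
    (xstar : EuclideanSpace ℝ (Fin N)) (hxs : xstar ∈ X) :
    2 * ∑ t ∈ Finset.Icc 1 T, (ℓ t (x t) - ℓ t xstar) ≤
      ((Finset.Icc 1 T).sup' (Finset.nonempty_Icc.mpr hT)
          (fun t => ‖x t - xstar‖ ^ 2)) *
        (1 / η T - ∑ t ∈ Finset.Icc 1 T, α t - 1 / η 0)
      + ∑ t ∈ Finset.Icc 1 T, η t * ‖G t‖ ^ 2
      + (1 / η 0) * ‖x 1 - xstar‖ ^ 2 := by
  set M := (Finset.Icc 1 T).sup' (Finset.nonempty_Icc.mpr hT)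
      (fun t => ‖x t - xstar‖ ^ 2) with hM
  -- per-step bound
  have step1 : ∀ t ∈ Finset.Icc 1 T, 2 * (ℓ t (x t) - ℓ t xstar) ≤
      (‖x t - xstar‖ ^ 2 - ‖x (t + 1) - xstar‖ ^ 2) * (1 / η t)
        - α t * ‖x t - xstar‖ ^ 2 + η t * ‖G t‖ ^ 2 := by
    intro t ht
    have hηt := (hη t ht).1
    have hsc' := hsc t ht xstar hxs
    obtain ⟨hmem, hmin⟩ := hproj t ht
    have hp := aogd_proj_sq hXc hmem hxs hmin
    have hexp : x t - η t • G t - xstar = (x t - xstar) - η t • G t := by abel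
    have hrhs : ‖x t - xstar - η t • G t‖ ^ 2 =
        ‖x t - xstar‖ ^ 2 - 2 * (η t * ⟪x t - xstar, G t⟫)
          + (η t * ‖G t‖) ^ 2 := by
      rw [norm_sub_sq_real, real_inner_smul_right, norm_smul,
        Real.norm_eq_abs, abs_of_pos hηt]
    rw [hexp, hrhs] at hp
    have hinner : ⟪xstar - x t, G t⟫ = -⟪x t - xstar, G t⟫ := by
      rw [← inner_neg_left]; congr 1; abel
    have hnorm : ‖xstar - x t‖ = ‖x t - xstar‖ := norm_sub_rev _ _
    rw [hnorm, hinner] at hsc'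
    have h7 : 2 * ⟪x t - xstar, G t⟫ - η t * ‖G t‖ ^ 2 ≤
        (‖x t - xstar‖ ^ 2 - ‖x (t + 1) - xstar‖ ^ 2) / η t := by
      rw [le_div_iff₀ hηt]
      nlinarith [hp]
    have h8 : (‖x t - xstar‖ ^ 2 - ‖x (t + 1) - xstar‖ ^ 2) / η t =
        (‖x t - xstar‖ ^ 2 - ‖x (t + 1) - xstar‖ ^ 2) * (1 / η t) := by ring
    linarith [hsc', h7]
  have step1sum : 2 * ∑ t ∈ Finset.Icc 1 T, (ℓ t (x t) - ℓ t xstar) ≤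
      ∑ t ∈ Finset.Icc 1 T,
        ((‖x t - xstar‖ ^ 2 - ‖x (t + 1) - xstar‖ ^ 2) * (1 / η t)
          - α t * ‖x t - xstar‖ ^ 2 + η t * ‖G t‖ ^ 2) := by
    rw [Finset.mul_sum]
    exact Finset.sum_le_sum step1
  -- Abel summation
  have hshift := aogd_sum_shift (fun t => ‖x t - xstar‖ ^ 2) (fun t => 1 / η t) T hT
  have sumeq : ∑ t ∈ Finset.Icc 1 T,
        ((‖x t - xstar‖ ^ 2 - ‖x (t + 1) - xstar‖ ^ 2) * (1 / η t)
          - α t * ‖x t - xstar‖ ^ 2 + η t * ‖G t‖ ^ 2)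
      = ∑ t ∈ Finset.Icc 1 T,
          (‖x t - xstar‖ ^ 2 * (1 / η t - 1 / η (t - 1) - α t))
        + ‖x 1 - xstar‖ ^ 2 * (1 / η 0)
        - ‖x (T + 1) - xstar‖ ^ 2 * (1 / η T)
        + ∑ t ∈ Finset.Icc 1 T, η t * ‖G t‖ ^ 2 := by
    have h1 : ∑ t ∈ Finset.Icc 1 T,
          ((‖x t - xstar‖ ^ 2 - ‖x (t + 1) - xstar‖ ^ 2) * (1 / η t)
            - α t * ‖x t - xstar‖ ^ 2 + η t * ‖G t‖ ^ 2)
        = ∑ t ∈ Finset.Icc 1 T,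
            (‖x t - xstar‖ ^ 2 * (1 / η t) - α t * ‖x t - xstar‖ ^ 2
              + η t * ‖G t‖ ^ 2)
          - ∑ t ∈ Finset.Icc 1 T, ‖x (t + 1) - xstar‖ ^ 2 * (1 / η t) := by
      rw [← Finset.sum_sub_distrib]
      exact Finset.sum_congr rfl (fun t _ => by ring)
    have h2 : ∑ t ∈ Finset.Icc 1 T,
          (‖x t - xstar‖ ^ 2 * (1 / η t) - α t * ‖x t - xstar‖ ^ 2
            + η t * ‖G t‖ ^ 2)
        - ∑ t ∈ Finset.Icc 1 T, ‖x t - xstar‖ ^ 2 * (1 / η (t - 1))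
        = ∑ t ∈ Finset.Icc 1 T,
            (‖x t - xstar‖ ^ 2 * (1 / η t - 1 / η (t - 1) - α t))
          + ∑ t ∈ Finset.Icc 1 T, η t * ‖G t‖ ^ 2 := by
      rw [← Finset.sum_sub_distrib, ← Finset.sum_add_distrib]
      exact Finset.sum_congr rfl (fun t _ => by ring)
    rw [h1, hshift]
    linarith [h2]
  -- telescoping of coefficients
  have ctele : ∑ t ∈ Finset.Icc 1 T, (1 / η t - 1 / η (t - 1) - α t)
      = (1 / η T - 1 / η 0) - ∑ t ∈ Finset.Icc 1 T, α t := by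
    have h := aogd_sum_tele (fun t => 1 / η t) T hT
    calc ∑ t ∈ Finset.Icc 1 T, (1 / η t - 1 / η (t - 1) - α t)
        = ∑ t ∈ Finset.Icc 1 T, ((1 / η t - 1 / η (t - 1)) - α t) := rfl
      _ = ∑ t ∈ Finset.Icc 1 T, (1 / η t - 1 / η (t - 1))
            - ∑ t ∈ Finset.Icc 1 T, α t := Finset.sum_sub_distrib _ _
      _ = (1 / η T - 1 / η 0) - ∑ t ∈ Finset.Icc 1 T, α t := by rw [h]
  -- bound by max
  have bound : ∑ t ∈ Finset.Icc 1 T,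
        (‖x t - xstar‖ ^ 2 * (1 / η t - 1 / η (t - 1) - α t))
      ≤ M * ((1 / η T - 1 / η 0) - ∑ t ∈ Finset.Icc 1 T, α t) := by
    rw [← ctele, Finset.mul_sum]
    apply Finset.sum_le_sum
    intro t ht
    have hct : 0 ≤ 1 / η t - 1 / η (t - 1) - α t := by
      have := (hη t ht).2; linarith
    exact mul_le_mul_of_nonneg_right
      (Finset.le_sup' (fun t => ‖x t - xstar‖ ^ 2) ht) hct
  have hTm : T ∈ Finset.Icc 1 T := Finset.mem_Icc.mpr ⟨hT, le_refl T⟩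
  have hdrop : 0 ≤ ‖x (T + 1) - xstar‖ ^ 2 * (1 / η T) := by
    have := (hη T hTm).1
    positivity
  have heq1 : M * ((1 / η T - 1 / η 0) - ∑ t ∈ Finset.Icc 1 T, α t)
      = M * (1 / η T - ∑ t ∈ Finset.Icc 1 T, α t - 1 / η 0) := by ring
  have heq2 : ‖x 1 - xstar‖ ^ 2 * (1 / η 0) = (1 / η 0) * ‖x 1 - xstar‖ ^ 2 := by
    ring
  linarith [step1sum, sumeq, bound, hdrop]
end

section
/- For scale-free online gradient descent with null updates and isotuning: with δ̂_t(y) = q‖ℓ_t‖²/(2y) (q > 0), Δ_0 = 0, δ_t = δ̂_t(Δ_{t-1}) if δ̂_t(Δ_{t-1}) ≤ Δ_{t-1} and δ_t = sqrt(q/2)‖ℓ_t‖ otherwise, and Δ_t = Δ_{t-1} + δ_t, it holds for all T that sqrt((q/2) Σ_{t=1}^T ‖ℓ_t‖²) ≤ Δ_T ≤ sqrt(q Σ_{t=1}^T ‖ℓ_t‖²) + sqrt(q/2) max_{t∈[T]} ‖ℓ_t‖. -/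
set_option maxHeartbeats 1000000

lemma sfogd_aux
    {E : Type*} [NormedAddCommGroup E]
    (T : ℕ) (q : ℝ) (hq : 0 < q)
    (ℓ : ℕ → E) (Δ : ℕ → ℝ) (hΔ0 : Δ 0 = 0)
    (hrec : ∀ t ∈ Finset.Icc 1 T,
      Δ t = Δ (t-1) +
        (if Real.sqrt (q / 2) * ‖ℓ t‖ ≤ Δ (t-1)
          then q * ‖ℓ t‖ ^ 2 / (2 * Δ (t-1))
          else Real.sqrt (q / 2) * ‖ℓ t‖)) :
    ∀ t, t ≤ T → 0 ≤ Δ t ∧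
      (q / 2) * ∑ s ∈ Finset.Icc 1 t, ‖ℓ s‖ ^ 2 ≤ (Δ t) ^ 2 ∧
      (∀ h1 : 1 ≤ t, Δ t ≤ Real.sqrt (q * ∑ s ∈ Finset.Icc 1 t, ‖ℓ s‖ ^ 2) +
        Real.sqrt (q / 2) *
          (Finset.Icc 1 t).sup' (Finset.nonempty_Icc.mpr h1) (fun s => ‖ℓ s‖)) := by
  intro t
  induction t with
  | zero =>
    intro _
    refine ⟨le_of_eq hΔ0.symm, by simp [hΔ0], fun h1 => by omega⟩
  | succ t ih =>
    intro hle
    obtain ⟨ih0, ihL, ihU⟩ := ih (by omega)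
    have hmem : t + 1 ∈ Finset.Icc 1 T := by
      simp only [Finset.mem_Icc]; omega
    have hrect := hrec (t+1) hmem
    simp only [Nat.add_sub_cancel] at hrect
    have ha0 : (0:ℝ) ≤ ‖ℓ (t+1)‖ := norm_nonneg _
    have hs : 0 < Real.sqrt (q/2) := Real.sqrt_pos.mpr (by linarith)
    have hs2 : Real.sqrt (q/2) ^ 2 = q/2 := Real.sq_sqrt (by linarith)
    have hsum : ∑ u ∈ Finset.Icc 1 (t+1), ‖ℓ u‖ ^ 2
        = (∑ u ∈ Finset.Icc 1 t, ‖ℓ u‖ ^ 2) + ‖ℓ (t+1)‖ ^ 2 :=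
      Finset.sum_Icc_succ_top (by omega) _
    have hSnn : (0:ℝ) ≤ ∑ u ∈ Finset.Icc 1 t, ‖ℓ u‖ ^ 2 :=
      Finset.sum_nonneg fun _ _ => sq_nonneg _
    have hne1 : (Finset.Icc 1 (t+1)).Nonempty := Finset.nonempty_Icc.mpr (by omega)
    set M := (Finset.Icc 1 (t+1)).sup' hne1 (fun s => ‖ℓ s‖) with hMdef
    have hMa : ‖ℓ (t+1)‖ ≤ M :=
      Finset.le_sup' (f := fun s => ‖ℓ s‖) (by simp only [Finset.mem_Icc]; omega)
    have hM0 : (0:ℝ) ≤ M := le_trans ha0 hMa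
    have hMmono : ∀ h1 : 1 ≤ t,
        (Finset.Icc 1 t).sup' (Finset.nonempty_Icc.mpr h1) (fun s => ‖ℓ s‖) ≤ M := by
      intro h1
      refine Finset.sup'_le _ _ fun b hb => ?_
      refine Finset.le_sup' (f := fun s => ‖ℓ s‖) ?_
      simp only [Finset.mem_Icc] at hb ⊢; omega
    have hsqmono : Real.sqrt (q * ∑ u ∈ Finset.Icc 1 t, ‖ℓ u‖ ^ 2)
        ≤ Real.sqrt (q * ∑ u ∈ Finset.Icc 1 (t+1), ‖ℓ u‖ ^ 2) := by
      apply Real.sqrt_le_sqrt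
      rw [hsum]
      nlinarith [sq_nonneg ‖ℓ (t+1)‖]
    by_cases hcond : Real.sqrt (q/2) * ‖ℓ (t+1)‖ ≤ Δ t
    · -- non-null update
      rw [if_pos hcond] at hrect
      rcases eq_or_lt_of_le ih0 with hD0 | hDpos
      · -- Δ t = 0, hence ‖ℓ (t+1)‖ = 0
        have haz : ‖ℓ (t+1)‖ = 0 := by nlinarith
        have hΔeq : Δ (t+1) = Δ t := by rw [hrect, haz]; simp
        refine ⟨by rw [hΔeq]; exact ih0, ?_, ?_⟩
        · rw [hΔeq, hsum, haz]; simpa using ihL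
        · intro _
          rcases Nat.eq_zero_or_pos t with ht0 | ht1
          · subst ht0
            rw [hΔeq, hΔ0]
            positivity
          · calc Δ (t+1) = Δ t := hΔeq
              _ ≤ _ := ihU ht1
              _ ≤ _ := add_le_add hsqmono
                  (mul_le_mul_of_nonneg_left (hMmono ht1) hs.le)
      · -- Δ t > 0
        have hδ0 : 0 ≤ q * ‖ℓ (t+1)‖ ^ 2 / (2 * Δ t) := by positivity
        have hkey : Δ t * (q * ‖ℓ (t+1)‖ ^ 2 / (2 * Δ t)) = q * ‖ℓ (t+1)‖ ^ 2 / 2 := by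
          field_simp
        have hδa : q * ‖ℓ (t+1)‖ ^ 2 / (2 * Δ t) ≤ Real.sqrt (q/2) * ‖ℓ (t+1)‖ := by
          rw [div_le_iff₀ (by linarith)]
          nlinarith [mul_nonneg hs.le ha0]
        refine ⟨by linarith, ?_, ?_⟩
        · rw [hrect, hsum]
          nlinarith [sq_nonneg (q * ‖ℓ (t+1)‖ ^ 2 / (2 * Δ t))]
        · intro _
          have hδM : q * ‖ℓ (t+1)‖ ^ 2 / (2 * Δ t) ≤ Real.sqrt (q/2) * M :=
            le_trans hδa (mul_le_mul_of_nonneg_left hMa hs.le)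
          by_cases hD : Δ t ≤ Real.sqrt (q * ∑ u ∈ Finset.Icc 1 (t+1), ‖ℓ u‖ ^ 2)
          · rw [hrect]; linarith
          · push_neg at hD
            have ht1 : 1 ≤ t := by
              rcases Nat.eq_zero_or_pos t with ht0 | ht1
              · exfalso; subst ht0; rw [hΔ0] at hDpos; exact lt_irrefl _ hDpos
              · exact ht1
            have hUt := ihU ht1
            set A := q * ∑ u ∈ Finset.Icc 1 t, ‖ℓ u‖ ^ 2 with hAdef
            set B := q * ∑ u ∈ Finset.Icc 1 (t+1), ‖ℓ u‖ ^ 2 with hBdef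
            have hBA : B = A + q * ‖ℓ (t+1)‖ ^ 2 := by rw [hBdef, hAdef, hsum]; ring
            have hAnn : 0 ≤ A := by positivity
            have hqa : 0 ≤ q * ‖ℓ (t+1)‖ ^ 2 := by positivity
            have hABle : A ≤ B := by rw [hBA]; linarith
            rcases eq_or_lt_of_le (le_trans hAnn hABle) with hB0 | hBpos
            · -- B = 0
              have haz : ‖ℓ (t+1)‖ = 0 := by
                have h2 : ‖ℓ (t+1)‖ ^ 2 = 0 := by nlinarith
                exact sq_eq_zero_iff.mp h2
              have : Δ (t+1) = Δ t := by rw [hrect, haz]; simp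
              rw [this]
              calc Δ t ≤ _ := hUt
                _ ≤ _ := add_le_add hsqmono (mul_le_mul_of_nonneg_left (hMmono ht1) hs.le)
            · have hsB : 0 < Real.sqrt B := Real.sqrt_pos.mpr hBpos
              have hδB : q * ‖ℓ (t+1)‖ ^ 2 / (2 * Δ t)
                  ≤ q * ‖ℓ (t+1)‖ ^ 2 / (2 * Real.sqrt B) := by
                apply div_le_div_of_nonneg_left (by positivity) (by linarith)
                linarith
              have hAB : Real.sqrt A + q * ‖ℓ (t+1)‖ ^ 2 / (2 * Real.sqrt B)
                  ≤ Real.sqrt B := by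
                have h1 : Real.sqrt A ^ 2 = A := Real.sq_sqrt hAnn
                have h2 : Real.sqrt B ^ 2 = B := Real.sq_sqrt hBpos.le
                have h3 : Real.sqrt A ≤ Real.sqrt B := Real.sqrt_le_sqrt (by linarith)
                rw [add_comm, ← le_sub_iff_add_le, div_le_iff₀ (by linarith)]
                nlinarith [sq_nonneg (Real.sqrt B - Real.sqrt A)]
              rw [hrect]
              calc Δ t + q * ‖ℓ (t+1)‖ ^ 2 / (2 * Δ t)
                  ≤ (Real.sqrt A + Real.sqrt (q/2) *
                      (Finset.Icc 1 t).sup' (Finset.nonempty_Icc.mpr ht1) (fun s => ‖ℓ s‖))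
                    + q * ‖ℓ (t+1)‖ ^ 2 / (2 * Real.sqrt B) := add_le_add hUt hδB
                _ ≤ Real.sqrt B + Real.sqrt (q/2) * M := by
                    have := mul_le_mul_of_nonneg_left (hMmono ht1) hs.le
                    linarith
    · -- null update
      rw [if_neg hcond] at hrect
      push_neg at hcond
      have hsa0 : 0 ≤ Real.sqrt (q/2) * ‖ℓ (t+1)‖ := mul_nonneg hs.le ha0
      have hsa2 : (Real.sqrt (q/2) * ‖ℓ (t+1)‖) ^ 2 = q/2 * ‖ℓ (t+1)‖ ^ 2 := by
        rw [mul_pow, hs2]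
      refine ⟨by linarith, ?_, ?_⟩
      · rw [hrect, hsum]
        nlinarith [mul_nonneg ih0 hsa0, hsa2]
      · intro _
        have h1 : Real.sqrt (q/2) * ‖ℓ (t+1)‖ ≤ Real.sqrt (q * ‖ℓ (t+1)‖ ^ 2) := by
          rw [Real.sqrt_mul hq.le, Real.sqrt_sq ha0]
          exact mul_le_mul_of_nonneg_right (Real.sqrt_le_sqrt (by linarith)) ha0
        have h2 : Real.sqrt (q * ‖ℓ (t+1)‖ ^ 2)
            ≤ Real.sqrt (q * ∑ u ∈ Finset.Icc 1 (t+1), ‖ℓ u‖ ^ 2) := by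
          apply Real.sqrt_le_sqrt
          rw [hsum]; nlinarith
        have h3 : Real.sqrt (q/2) * ‖ℓ (t+1)‖ ≤ Real.sqrt (q/2) * M :=
          mul_le_mul_of_nonneg_left hMa hs.le
        rw [hrect]
        calc Δ t + Real.sqrt (q/2) * ‖ℓ (t+1)‖
            ≤ Real.sqrt (q/2) * ‖ℓ (t+1)‖ + Real.sqrt (q/2) * ‖ℓ (t+1)‖ := by linarith
          _ ≤ _ := add_le_add (le_trans h1 h2) h3

/-- Bounds on `Δ_T` for scale-free online gradient descent with isotuning and
null updates (threshold `c = 1`); the null-update test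
`δ̂_t(Δ_{t-1}) > Δ_{t-1}` is expressed in its equivalent form
`sqrt(q/2) ‖ℓ_t‖ > Δ_{t-1}`. -/
theorem scale_free_ogd_delta_bounds
    {E : Type*} [NormedAddCommGroup E]
    (T : ℕ) (hT : 1 ≤ T) (q : ℝ) (hq : 0 < q)
    (ℓ : ℕ → E) (Δ : ℕ → ℝ) (hΔ0 : Δ 0 = 0)
    (hrec : ∀ t ∈ Finset.Icc 1 T,
      Δ t = Δ (t-1) +
        (if Real.sqrt (q / 2) * ‖ℓ t‖ ≤ Δ (t-1)
          then q * ‖ℓ t‖ ^ 2 / (2 * Δ (t-1))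
          else Real.sqrt (q / 2) * ‖ℓ t‖)) :
    Real.sqrt ((q / 2) * ∑ t ∈ Finset.Icc 1 T, ‖ℓ t‖ ^ 2) ≤ Δ T ∧
    Δ T ≤ Real.sqrt (q * ∑ t ∈ Finset.Icc 1 T, ‖ℓ t‖ ^ 2) +
      Real.sqrt (q / 2) *
        (Finset.Icc 1 T).sup' (Finset.nonempty_Icc.mpr hT) (fun t => ‖ℓ t‖) := by
  obtain ⟨h0, hL, hU⟩ := sfogd_aux T q hq ℓ Δ hΔ0 hrec T le_rfl
  constructor
  · have := Real.sqrt_le_sqrt hL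
    rwa [Real.sqrt_sq h0] at this
  · exact hU hT
end
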